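/- Let v̄ = (v₀,v) ∈ ℝ×ℝ² with v ≠ 0, and define the three vectors X_a(v̄) = v̄/|v̄|, X_b(v̄) = (|v|/|v̄|, −v₀ v/(|v̄| |v|)), and X_c(v̄) = (0, Jv/|v|), where J(v₁,v₂) = (−v₂,v₁). Then (X_a(v̄), X_b(v̄), X_c(v̄)) is an orthonormal basis of ℝ³ ≅ ℝ×ℝ², and the gradient of the dispersion relation decomposes as ∇ω(v̄) = 3v₀|v̄| · X_a(v̄) + |v||v̄| · X_b(v̄); in particular X_c(v̄) · ∇ω(v̄) = 0. -/

import Mathlib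

noncomputable section

open scoped RealInnerProductSpace

/-- The frequency space `ℝ × ℝ²`, represented as Euclidean `ℝ³`:
coordinate `0` is `v₀` and coordinates `1, 2` form the spatial part `v`. -/
abbrev E3 : Type := EuclideanSpace ℝ (Fin 3)

/-- Build an element of `E3` from its three coordinates. -/
def vec3 (a b c : ℝ) : E3 := WithLp.toLp 2 ![a, b, c]

/-- The norm `|v|` of the spatial part `v = (v₁, v₂)` of `v̄`. -/
def snorm2 (v : E3) : ℝ := Real.sqrt ((v 1) ^ 2 + (v 2) ^ 2)

/-- The gradient of the dispersion relation, `∇ω(v̄) = (3v₀² + |v|², 2v₀v)`. -/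
def gradOmega (v : E3) : E3 :=
  vec3 (3 * (v 0) ^ 2 + (v 1) ^ 2 + (v 2) ^ 2) (2 * v 0 * v 1) (2 * v 0 * v 2)

/-- The radial vector `X_a(v̄) = v̄/|v̄|`. -/
def Xa (v : E3) : E3 := ‖v‖⁻¹ • v

/-- The vector `X_b(v̄) = (|v|/|v̄|, −v₀ v/(|v̄||v|))`. -/
def Xb (v : E3) : E3 :=
  vec3 (snorm2 v / ‖v‖) (-(v 0) * v 1 / (‖v‖ * snorm2 v)) (-(v 0) * v 2 / (‖v‖ * snorm2 v))

/-- The angular vector `X_c(v̄) = (0, Jv/|v|)` with `J(v₁,v₂) = (−v₂,v₁)`. -/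
def Xc (v : E3) : E3 := vec3 0 (-(v 2) / snorm2 v) (v 1 / snorm2 v)

lemma inner_eq3 (x y : E3) : ⟪x, y⟫ = x 0 * y 0 + x 1 * y 1 + x 2 * y 2 := by
  simp [PiLp.inner_apply, Fin.sum_univ_three, RCLike.inner_apply]; ring

lemma Xa_apply (v : E3) (i : Fin 3) : Xa v i = ‖v‖⁻¹ * v i := rfl
lemma Xb_0 (v : E3) : Xb v 0 = snorm2 v / ‖v‖ := rfl
lemma Xb_1 (v : E3) : Xb v 1 = -(v 0) * v 1 / (‖v‖ * snorm2 v) := rfl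
lemma Xb_2 (v : E3) : Xb v 2 = -(v 0) * v 2 / (‖v‖ * snorm2 v) := rfl
lemma Xc_0 (v : E3) : Xc v 0 = 0 := rfl
lemma Xc_1 (v : E3) : Xc v 1 = -(v 2) / snorm2 v := rfl
lemma Xc_2 (v : E3) : Xc v 2 = v 1 / snorm2 v := rfl
lemma grad_0 (v : E3) : gradOmega v 0 = 3 * (v 0) ^ 2 + (v 1) ^ 2 + (v 2) ^ 2 := rfl
lemma grad_1 (v : E3) : gradOmega v 1 = 2 * v 0 * v 1 := rfl
lemma grad_2 (v : E3) : gradOmega v 2 = 2 * v 0 * v 2 := rfl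

/-- for `v ≠ 0`, `(X_a(v̄), X_b(v̄), X_c(v̄))` is an orthonormal basis of
`ℝ³ ≅ ℝ×ℝ²`, the gradient of the dispersion relation decomposes as
`∇ω(v̄) = 3v₀|v̄|·X_a(v̄) + |v||v̄|·X_b(v̄)`, and in particular `X_c(v̄)·∇ω(v̄) = 0`. -/
theorem stmt_7 (v : E3) (hv : ¬(v 1 = 0 ∧ v 2 = 0)) :
    Orthonormal ℝ ![Xa v, Xb v, Xc v] ∧
    Submodule.span ℝ (Set.range ![Xa v, Xb v, Xc v]) = ⊤ ∧
    gradOmega v = (3 * v 0 * ‖v‖) • Xa v + (snorm2 v * ‖v‖) • Xb v ∧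
    ⟪Xc v, gradOmega v⟫ = 0 := by
  have h12 : 0 < v 1 ^ 2 + v 2 ^ 2 := by
    rcases not_and_or.mp hv with h | h
    · exact add_pos_of_pos_of_nonneg (by positivity) (sq_nonneg _)
    · exact add_pos_of_nonneg_of_pos (sq_nonneg _) (by positivity)
  have hs : 0 < snorm2 v := Real.sqrt_pos.mpr h12
  have hs2 : snorm2 v ^ 2 = v 1 ^ 2 + v 2 ^ 2 := Real.sq_sqrt h12.le
  have hn2 : ‖v‖ ^ 2 = v 0 ^ 2 + v 1 ^ 2 + v 2 ^ 2 := by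
    rw [EuclideanSpace.norm_eq, Real.sq_sqrt (by positivity)]
    simp [Fin.sum_univ_three, sq_abs]
  have hn : 0 < ‖v‖ := by nlinarith [norm_nonneg v, sq_nonneg (v 0)]
  have hs' := hs.ne'
  have hn' := hn.ne'
  have haa : ⟪Xa v, Xa v⟫ = 1 := by
    simp only [inner_eq3, Xa_apply]; field_simp; linear_combination -hn2
  have hab : ⟪Xa v, Xb v⟫ = 0 := by
    simp only [inner_eq3, Xa_apply, Xb_0, Xb_1, Xb_2]; field_simp
    linear_combination v 0 * hs2
  have hac : ⟪Xa v, Xc v⟫ = 0 := by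
    simp only [inner_eq3, Xa_apply, Xc_0, Xc_1, Xc_2]; field_simp; ring
  have hbb : ⟪Xb v, Xb v⟫ = 1 := by
    simp only [inner_eq3, Xb_0, Xb_1, Xb_2]; field_simp
    linear_combination (snorm2 v^2 - v 0^2) * hs2 - snorm2 v^2 * hn2
  have hbc : ⟪Xb v, Xc v⟫ = 0 := by
    simp only [inner_eq3, Xb_0, Xb_1, Xb_2, Xc_0, Xc_1, Xc_2]; field_simp; ring
  have hcc : ⟪Xc v, Xc v⟫ = 1 := by
    simp only [inner_eq3, Xc_0, Xc_1, Xc_2]; field_simp; linear_combination -hs2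
  have hba : ⟪Xb v, Xa v⟫ = 0 := by rw [real_inner_comm]; exact hab
  have hca : ⟪Xc v, Xa v⟫ = 0 := by rw [real_inner_comm]; exact hac
  have hcb : ⟪Xc v, Xb v⟫ = 0 := by rw [real_inner_comm]; exact hbc
  have horth : Orthonormal ℝ ![Xa v, Xb v, Xc v] := by
    rw [orthonormal_iff_ite]
    intro i j
    fin_cases i <;> fin_cases j
    exacts [haa, hab, hac, hba, hbb, hbc, hca, hcb, hcc]
  refine ⟨horth, ?_, ?_, ?_⟩
  · exact horth.linearIndependent.span_eq_top_of_card_eq_finrank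
      (by simp [finrank_euclideanSpace])
  · ext i
    fin_cases i
    · show gradOmega v 0 = (3 * v 0 * ‖v‖) * Xa v 0 + (snorm2 v * ‖v‖) * Xb v 0
      rw [grad_0, Xa_apply, Xb_0]; field_simp; linear_combination -hs2
    · show gradOmega v 1 = (3 * v 0 * ‖v‖) * Xa v 1 + (snorm2 v * ‖v‖) * Xb v 1
      rw [grad_1, Xa_apply, Xb_1]; field_simp; ring
    · show gradOmega v 2 = (3 * v 0 * ‖v‖) * Xa v 2 + (snorm2 v * ‖v‖) * Xb v 2
      rw [grad_2, Xa_apply, Xb_2]; field_simp; ring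
  · simp only [inner_eq3, Xc_0, Xc_1, Xc_2, grad_0, grad_1, grad_2]
    field_simp
    ring
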